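/- Let β ∈ (0,1) and let g_β(x) = (1−β−x−√((1−β−x)²−4βx))/(2βx). Then the formal power series identity holds: Σ_{k≥0} z̄_{k+1} x^k = (1/x) ln((1 + β − x + √((1−β−x)² − 4βx))/2), where z̄_m = Σ_{l=1}^m ((−1)^{l+1}/l) Σ_{k_1+⋯+k_l = m, k_i ≥ 1} p_{k_1}⋯p_{k_l}, with p_1 = −1/(1−β) and p_k = −β v_k^{(∞)} for k ≥ 2 (v_k^{(∞)} the coefficients of g_β, i.e., g_β(x) = Σ_{m≥0} v_{m+1}^{(∞)} x^m). -/

import Mathlib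

set_option maxHeartbeats 1000000

open Finset

lemma aux_key_pi (h : ℕ → ℝ) (hs : Summable fun k => |h k|) :
    ∀ l : ℕ, HasSum (fun c : Fin l → ℕ => ∏ i, h (c i)) ((∑' k, h k) ^ l) ∧
      Summable (fun c : Fin l → ℕ => |∏ i, h (c i)|) := by
  intro l
  induction l with
  | zero =>
      constructor
      · have h1 : HasSum (fun c : Fin 0 → ℕ => ∏ i, h (c i))
            ((fun c : Fin 0 → ℕ => ∏ i, h (c i)) default) :=
          hasSum_single default (fun b hb => absurd (Subsingleton.elim b default) hb)
        simpa using h1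
      · have h1 : HasSum (fun c : Fin 0 → ℕ => |∏ i, h (c i)|)
            ((fun c : Fin 0 → ℕ => |∏ i, h (c i)|) default) :=
          hasSum_single default (fun b hb => absurd (Subsingleton.elim b default) hb)
        exact h1.summable
  | succ l ih =>
      obtain ⟨ih1, ih2⟩ := ih
      have hh : Summable h := summable_abs_iff.1 hs
      have hs' : Summable (fun k => ‖h k‖) := by simpa [Real.norm_eq_abs] using hs
      have ih2' : Summable (fun c : Fin l → ℕ => ‖∏ i, h (c i)‖) := by
        simp only [Real.norm_eq_abs]; exact ih2
      have hmulnorm := Summable.mul_norm (f := h)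
        (g := fun c : Fin l → ℕ => ∏ i, h (c i)) hs' ih2'
      have hmul : HasSum (fun p : ℕ × (Fin l → ℕ) => h p.1 * ∏ i, h (p.2 i))
          ((∑' k, h k) * (∑' k, h k) ^ l) :=
        HasSum.mul (f := h) (g := fun c : Fin l → ℕ => ∏ i, h (c i)) hh.hasSum ih1
          (Summable.of_norm hmulnorm)
      set e := (Fin.consEquiv fun _ : Fin (l+1) => ℕ).symm with he
      have heq : ((fun p : ℕ × (Fin l → ℕ) => h p.1 * ∏ i, h (p.2 i)) ∘ e)
          = fun c : Fin (l+1) → ℕ => ∏ i, h (c i) := by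
        funext c
        simp [he, Fin.consEquiv, Fin.prod_univ_succ, Fin.tail]
      constructor
      · have h2 : HasSum ((fun p : ℕ × (Fin l → ℕ) => h p.1 * ∏ i, h (p.2 i)) ∘ e)
            ((∑' k, h k) * (∑' k, h k) ^ l) := (e.hasSum_iff).2 hmul
        rw [heq] at h2
        simpa [pow_succ, mul_comm] using h2
      · have h2 : Summable ((fun p : ℕ × (Fin l → ℕ) => ‖h p.1 * ∏ i, h (p.2 i)‖) ∘ e) :=
          (e.summable_iff).2 hmulnorm
        have heq2 : ((fun p : ℕ × (Fin l → ℕ) => ‖h p.1 * ∏ i, h (p.2 i)‖) ∘ e)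
            = fun c : Fin (l+1) → ℕ => |∏ i, h (c i)| := by
          funext c
          simp [he, Fin.consEquiv, Fin.prod_univ_succ, Real.norm_eq_abs, abs_mul, abs_prod, Fin.tail]
        rwa [heq2] at h2

lemma aux_key_ad (h : ℕ → ℝ) (hs : Summable fun k => |h k|) (l : ℕ) :
    HasSum (fun m : ℕ => ∑ c ∈ Finset.Nat.antidiagonalTuple l m, ∏ i, h (c i))
      ((∑' k, h k) ^ l) := by
  obtain ⟨h1, -⟩ := aux_key_pi h hs l
  set e := Equiv.sigmaFiberEquiv (fun c : Fin l → ℕ => ∑ i, c i) with he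
  have h2 : HasSum ((fun c : Fin l → ℕ => ∏ i, h (c i)) ∘ e) ((∑' k, h k) ^ l) :=
    (e.hasSum_iff).2 h1
  refine HasSum.sigma h2 ?_
  intro m
  haveI : Fintype {c : Fin l → ℕ // ∑ i, c i = m} :=
    Fintype.ofEquiv _ (Equiv.subtypeEquivRight
      (fun c : Fin l → ℕ => Finset.Nat.mem_antidiagonalTuple (k := l) (n := m)))
  have hfs : HasSum (fun c : {c : Fin l → ℕ // ∑ i, c i = m} => ∏ i, h (c.1 i))
      (∑ c : {c : Fin l → ℕ // ∑ i, c i = m}, ∏ i, h (c.1 i)) := hasSum_fintype _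
  have hsum : (∑ c : {c : Fin l → ℕ // ∑ i, c i = m}, ∏ i, h (c.1 i))
      = ∑ c ∈ Finset.Nat.antidiagonalTuple l m, ∏ i, h (c i) :=
    calc (∑ c : {c : Fin l → ℕ // ∑ i, c i = m}, ∏ i, h (c.1 i))
        = ∑ c : {c : Fin l → ℕ // c ∈ Finset.Nat.antidiagonalTuple l m}, ∏ i, h (c.1 i) :=
          (Fintype.sum_equiv (Equiv.subtypeEquivRight
              (fun c : Fin l → ℕ => Finset.Nat.mem_antidiagonalTuple (k := l) (n := m)))
            (fun c : {c : Fin l → ℕ // c ∈ Finset.Nat.antidiagonalTuple l m} =>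
              ∏ i, h (c.1 i))
            (fun c : {c : Fin l → ℕ // ∑ i, c i = m} => ∏ i, h (c.1 i))
            (fun c => rfl)).symm
      _ = ∑ c ∈ Finset.Nat.antidiagonalTuple l m, ∏ i, h (c i) :=
          Finset.sum_coe_sort (Finset.Nat.antidiagonalTuple l m) (fun c => ∏ i, h (c i))
  rw [hsum] at hfs
  exact hfs

lemma aux_V1 (β : ℝ) (hβ0 : 0 < β) (hβ1 : β < 1) (V : ℕ → ℝ) (ε₀ : ℝ) (hε₀ : 0 < ε₀)
    (H : ∀ x : ℝ, x ≠ 0 → |x| < ε₀ →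
      HasSum (fun m : ℕ => V (m + 1) * x ^ m)
        ((1 - β - x - Real.sqrt ((1 - β - x) ^ 2 - 4 * β * x)) / (2 * β * x))) :
    V 1 = 1 / (1 - β) := by
  have h1β : (0:ℝ) < 1 - β := by linarith
  set r : ℝ := min (ε₀/2) (min ((1-β)/2) ((1-β)^2/16)) with hrdef
  have hr0 : 0 < r := lt_min (by linarith) (lt_min (by linarith) (by positivity))
  have hrε : r < ε₀ := lt_of_le_of_lt (min_le_left _ _) (by linarith)
  have hr1 : r ≤ (1-β)/2 := le_trans (min_le_right _ _) (min_le_left _ _)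
  have hr2 : r ≤ (1-β)^2/16 := le_trans (min_le_right _ _) (min_le_right _ _)
  set G : ℝ → ℝ := fun x =>
    (1 - β - x - Real.sqrt ((1 - β - x) ^ 2 - 4 * β * x)) / (2 * β * x) with hGdef
  -- eventual equality with a continuous function
  have hsmall : ∀ᶠ x : ℝ in nhdsWithin 0 {(0:ℝ)}ᶜ, x ≠ 0 ∧ |x| < r := by
    have h1 : ∀ᶠ x : ℝ in nhdsWithin 0 {(0:ℝ)}ᶜ, |x| < r := by
      apply Filter.Eventually.filter_mono nhdsWithin_le_nhds
      have := Metric.ball_mem_nhds (0:ℝ) hr0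
      filter_upwards [this] with y hy
      simpa [Real.dist_eq] using hy
    have h2 : ∀ᶠ x : ℝ in nhdsWithin 0 {(0:ℝ)}ᶜ, x ≠ 0 := by
      filter_upwards [eventually_mem_nhdsWithin] with y hy
      simpa using hy
    filter_upwards [h1, h2] with y hy1 hy2 using ⟨hy2, hy1⟩
  have hfacts : ∀ x : ℝ, |x| < r →
      0 ≤ (1 - β - x) ^ 2 - 4 * β * x ∧ (1-β)/2 ≤ 1 - β - x := by
    intro x hx
    obtain ⟨hx1, hx2⟩ := abs_lt.1 hx
    have h6 : (1-β)/2 ≤ 1 - β - x := by linarith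
    refine ⟨?_, h6⟩
    nlinarith [sq_nonneg (1 - β - x - (1-β)/2), sq_nonneg (1 - β - x), hβ0.le, hβ1.le]
  have heveq : (fun x : ℝ => 2 / ((1 - β - x) + Real.sqrt ((1 - β - x) ^ 2 - 4 * β * x)))
      =ᶠ[nhdsWithin 0 {(0:ℝ)}ᶜ] G := by
    filter_upwards [hsmall] with x hx
    obtain ⟨hx0, hxr⟩ := hx
    obtain ⟨hD, hlb⟩ := hfacts x hxr
    have hsq : Real.sqrt ((1 - β - x) ^ 2 - 4 * β * x) ^ 2 = (1 - β - x) ^ 2 - 4 * β * x :=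
      Real.sq_sqrt hD
    have hsn : 0 ≤ Real.sqrt ((1 - β - x) ^ 2 - 4 * β * x) := Real.sqrt_nonneg _
    have hden : 0 < (1 - β - x) + Real.sqrt ((1 - β - x) ^ 2 - 4 * β * x) := by linarith
    have hbx : (2 : ℝ) * β * x ≠ 0 := by
      have : β * x ≠ 0 := mul_ne_zero hβ0.ne' hx0
      simpa [mul_assoc] using mul_ne_zero two_ne_zero this
    rw [hGdef]
    rw [div_eq_div_iff hden.ne' hbx]
    nlinarith [hsq]
  have hcont : ContinuousAt
      (fun x : ℝ => 2 / ((1 - β - x) + Real.sqrt ((1 - β - x) ^ 2 - 4 * β * x))) 0 := by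
    apply ContinuousAt.div continuousAt_const
    · exact ((continuousAt_const.sub continuousAt_id).add
        (Real.continuous_sqrt.continuousAt.comp (by fun_prop)))
    · have : Real.sqrt ((1 - β - (0:ℝ)) ^ 2 - 4 * β * 0) = 1 - β := by
        rw [show (1 - β - (0:ℝ)) ^ 2 - 4 * β * 0 = (1-β)^2 by ring]
        exact Real.sqrt_sq h1β.le
      simp only [this]
      intro hc
      simp at hc
      linarith
  have hval : 2 / (1 - β - (0:ℝ) + Real.sqrt ((1 - β - (0:ℝ)) ^ 2 - 4 * β * 0))
      = 1 / (1 - β) := by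
    have hh : Real.sqrt ((1 - β - (0:ℝ)) ^ 2 - 4 * β * 0) = 1 - β := by
      rw [show (1 - β - (0:ℝ)) ^ 2 - 4 * β * 0 = (1-β)^2 by ring]
      exact Real.sqrt_sq h1β.le
    rw [hh, show (1 - β - (0:ℝ)) + (1 - β) = 2 * (1-β) by ring]
    rw [div_eq_div_iff (by linarith) (by linarith)]
    ring
  have htendφ : Filter.Tendsto
      (fun x : ℝ => 2 / ((1 - β - x) + Real.sqrt ((1 - β - x) ^ 2 - 4 * β * x)))
      (nhdsWithin 0 {(0:ℝ)}ᶜ) (nhds (1 / (1 - β))) := by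
    have := hcont.tendsto.mono_left (nhdsWithin_le_nhds (s := {(0:ℝ)}ᶜ))
    rwa [hval] at this
  have htendG : Filter.Tendsto G (nhdsWithin 0 {(0:ℝ)}ᶜ) (nhds (1 / (1 - β))) :=
    htendφ.congr' heveq
  -- G also tends to V 1
  have hsumr := (H r hr0.ne' (by rwa [abs_of_pos hr0])).summable
  have hsumrV : Summable (fun m => |V (m+1) * r^m|) := hsumr.abs
  have hC : Summable (fun n => |V (n+2) * r^(n+1)|) := by
    have := (summable_nat_add_iff (f := fun m => |V (m+1) * r^m|) 1).2 hsumrV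
    exact this
  have hC2 : Summable (fun n => |V (n+2)| * r^n) := by
    refine (hC.mul_left r⁻¹).congr fun n => ?_
    rw [abs_mul, abs_pow, abs_of_pos hr0, pow_succ]
    field_simp
  set C := ∑' n, |V (n+2)| * r^n with hCdef
  have hbound : ∀ᶠ x : ℝ in nhdsWithin 0 {(0:ℝ)}ᶜ, ‖G x - V 1‖ ≤ C * |x| := by
    filter_upwards [hsmall] with x hx
    obtain ⟨hx0, hxr⟩ := hx
    have hS := H x hx0 (lt_trans hxr hrε)
    have hshift : HasSum (fun n => V (n+2) * x^(n+1)) (G x - V 1) := by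
      refine (hasSum_nat_add_iff (f := fun m => V (m+1) * x^m) 1).2 ?_
      simpa using hS
    have hmaj : ∀ n, |V (n+2) * x^(n+1)| ≤ (|V (n+2)| * r^n) * |x| := by
      intro n
      rw [abs_mul, abs_pow, pow_succ]
      rw [mul_assoc]
      apply mul_le_mul_of_nonneg_left _ (abs_nonneg _)
      apply mul_le_mul_of_nonneg_right _ (abs_nonneg _)
      exact pow_le_pow_left₀ (abs_nonneg _) hxr.le n
    have hsummaj : Summable (fun n => (|V (n+2)| * r^n) * |x|) := hC2.mul_right _
    have habs : Summable (fun n => |V (n+2) * x^(n+1)|) :=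
      Summable.of_nonneg_of_le (fun _ => abs_nonneg _) hmaj hsummaj
    calc ‖G x - V 1‖ = |∑' n, V (n+2) * x^(n+1)| := by rw [hshift.tsum_eq]; rfl
      _ ≤ ∑' n, |V (n+2) * x^(n+1)| := by
          have habs' : Summable fun n => ‖V (n+2) * x^(n+1)‖ := by
            simp only [Real.norm_eq_abs]; exact habs
          have h5 := norm_tsum_le_tsum_norm habs'
          simp only [Real.norm_eq_abs] at h5
          exact h5
      _ ≤ ∑' n, (|V (n+2)| * r^n) * |x| := Summable.tsum_le_tsum hmaj habs hsummaj
      _ = C * |x| := by rw [tsum_mul_right]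
  have htend0 : Filter.Tendsto (fun x : ℝ => C * |x|)
      (nhdsWithin 0 {(0:ℝ)}ᶜ) (nhds 0) := by
    have h1 : Filter.Tendsto (fun x : ℝ => C * |x|) (nhds 0) (nhds (C * |(0:ℝ)|)) :=
      (continuous_const.mul continuous_abs).tendsto 0
    have := h1.mono_left (nhdsWithin_le_nhds (s := {(0:ℝ)}ᶜ))
    simpa using this
  have htendG2 : Filter.Tendsto G (nhdsWithin 0 {(0:ℝ)}ᶜ) (nhds (V 1)) := by
    rw [← tendsto_sub_nhds_zero_iff]
    exact squeeze_zero_norm' hbound htend0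
  exact tendsto_nhds_unique htendG2 htendG

theorem stmt16 (β : ℝ) (hβ : β ∈ Set.Ioo (0 : ℝ) 1) (V : ℕ → ℝ)
    (hg : ∃ ε > (0 : ℝ), ∀ x : ℝ, x ≠ 0 → |x| < ε →
      HasSum (fun m : ℕ => V (m + 1) * x ^ m)
        ((1 - β - x - Real.sqrt ((1 - β - x) ^ 2 - 4 * β * x)) / (2 * β * x))) :
    ∃ ε > (0 : ℝ), ∀ x : ℝ, x ≠ 0 → |x| < ε →
      HasSum (fun k : ℕ =>
          (∑ l ∈ Finset.Icc 1 (k + 1), ((-1 : ℝ) ^ (l + 1) / l) *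
            ∑ c ∈ (Finset.Nat.antidiagonalTuple l (k + 1)).filter (fun c => ∀ i, 0 < c i),
              ∏ i, (if c i = 1 then -1 / (1 - β) else -β * V (c i))) * x ^ k)
        ((1 / x) * Real.log ((1 + β - x + Real.sqrt ((1 - β - x) ^ 2 - 4 * β * x)) / 2)) := by
  obtain ⟨hβ0, hβ1⟩ := hβ
  obtain ⟨ε₀, hε₀, H⟩ := hg
  have h1β : (0:ℝ) < 1 - β := by linarith
  have hV1 : V 1 = 1 / (1 - β) := aux_V1 β hβ0 hβ1 V ε₀ hε₀ H
  set a : ℕ → ℝ := fun k => if k = 0 then 0 else if k = 1 then -1/(1-β) else -β * V k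
    with hadef
  have ha0 : a 0 = 0 := by simp [hadef]
  have ha_succ : ∀ m : ℕ, a (m+1) = -β * V (m+1) + (if m = 0 then (-1:ℝ) else 0) := by
    intro m
    match m with
    | 0 =>
        simp only [hadef, hV1]
        norm_num
        field_simp
        ring
    | (n+1) =>
        simp [hadef]
  set r : ℝ := ε₀ / 2 with hrdef
  have hr0 : 0 < r := by positivity
  have hrε : r < ε₀ := by simp only [hrdef]; linarith
  -- summability of |a k| r^k
  have haar : Summable (fun m => a (m+1) * r^(m+1)) := by
    have s1 : Summable (fun m => (-(β*r)) * (V (m+1) * r^m)) :=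
      ((H r hr0.ne' (by rwa [abs_of_pos hr0])).summable).mul_left _
    have s2 : Summable (fun m : ℕ => if m = 0 then (-r : ℝ) else 0) :=
      (hasSum_ite_eq 0 (-r)).summable
    refine (s1.add s2).congr fun m => ?_
    rw [ha_succ m]
    match m with
    | 0 => simp; ring
    | (n+1) => simp [pow_succ]; ring
  have hsumabs_r : Summable (fun k => |a k| * r^k) := by
    have h1 : Summable (fun k => |a k * r^k|) :=
      (summable_nat_add_iff (f := fun k => |a k * r^k|) 1).1 haar.abs
    refine h1.congr fun k => ?_
    rw [abs_mul, abs_pow, abs_of_pos hr0]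
  set M : ℝ := ∑' k, |a k| * r^k with hMdef
  have hM0 : 0 ≤ M := tsum_nonneg (fun k => by positivity)
  refine ⟨min r (r/(2*(M+1))), lt_min hr0 (by positivity), ?_⟩
  intro x hx hxlt
  have hxr : |x| < r := lt_of_lt_of_le hxlt (min_le_left _ _)
  have hxM : |x| < r/(2*(M+1)) := lt_of_lt_of_le hxlt (min_le_right _ _)
  have hxε₀ : |x| < ε₀ := lt_trans hxr hrε
  set h : ℕ → ℝ := fun k => a k * x^k with hhdef
  have hh0 : h 0 = 0 := by simp [hhdef, ha0]
  -- summability of |h|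
  have hbnd : ∀ k, |h k| ≤ (|a k| * r^k) * (|x|/r) := by
    intro k
    match k with
    | 0 => simp [hhdef, ha0]
    | (n+1) =>
        simp only [hhdef]
        rw [abs_mul, abs_pow, mul_assoc]
        apply mul_le_mul_of_nonneg_left _ (abs_nonneg _)
        have h01 : 0 ≤ |x|/r := by positivity
        have h02 : |x|/r ≤ 1 := by
          rw [div_le_one hr0]; exact hxr.le
        have key : (|x|/r)^(n+1) ≤ |x|/r := by
          calc (|x|/r)^(n+1) ≤ (|x|/r)^1 := pow_le_pow_of_le_one h01 h02 (by omega)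
            _ = |x|/r := pow_one _
        calc |x|^(n+1) = (r * (|x|/r))^(n+1) := by rw [mul_div_cancel₀ _ hr0.ne']
          _ = r^(n+1) * (|x|/r)^(n+1) := mul_pow _ _ _
          _ ≤ r^(n+1) * (|x|/r) := mul_le_mul_of_nonneg_left key (by positivity)
  have hsummaj : Summable (fun k => (|a k| * r^k) * (|x|/r)) := hsumabs_r.mul_right _
  have habs : Summable (fun k => |h k|) :=
    Summable.of_nonneg_of_le (fun _ => abs_nonneg _) hbnd hsummaj
  set A : ℝ := ∑' k, |h k| with hAdef
  have hA0 : 0 ≤ A := tsum_nonneg (fun k => abs_nonneg _)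
  have hA1 : A < 1 := by
    have h1 : A ≤ M * (|x|/r) := by
      have := Summable.tsum_le_tsum hbnd habs hsummaj
      rwa [tsum_mul_right, ← hMdef] at this
    have h2 : |x|/r < 1/(2*(M+1)) := by
      rw [div_lt_div_iff₀ hr0 (by positivity)]
      calc |x| * (2*(M+1)) = (2*(M+1)) * |x| := by ring
        _ < (2*(M+1)) * (r/(2*(M+1))) := by
            apply mul_lt_mul_of_pos_left hxM (by positivity)
        _ = 1 * r := by field_simp
    have h3 : M * (|x|/r) ≤ M * (1/(2*(M+1))) :=
      mul_le_mul_of_nonneg_left h2.le hM0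
    have h4 : M * (1/(2*(M+1))) < 1 := by
      rw [mul_one_div, div_lt_one (by positivity)]
      linarith
    linarith
  -- HasSum of h
  set P : ℝ := -x - (1 - β - x - Real.sqrt ((1 - β - x) ^ 2 - 4 * β * x))/2 with hPdef
  have hS := H x hx hxε₀
  have hstep : HasSum (fun m => a (m+1) * x^(m+1)) P := by
    have h1 := hS.mul_left (-(β*x))
    have h2 : HasSum (fun m : ℕ => if m = 0 then -x else 0) (-x) := hasSum_ite_eq 0 (-x)
    have h3 := h1.add h2
    have hfe : (fun m => -(β*x) * (V (m+1) * x^m) + (if m = 0 then -x else 0))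
        = fun m => a (m+1) * x^(m+1) := by
      funext m
      rw [ha_succ m]
      match m with
      | 0 => simp; ring
      | (n+1) => simp [pow_succ]; ring
    rw [hfe] at h3
    suffices hPe : P = -(β*x) * ((1 - β - x - Real.sqrt ((1 - β - x) ^ 2 - 4 * β * x)) / (2 * β * x)) + -x by
      rw [hPe]; exact h3
    rw [hPdef]
    have hbx : (2:ℝ) * β * x ≠ 0 := by
      have : β * x ≠ 0 := mul_ne_zero hβ0.ne' hx
      simpa [mul_assoc] using mul_ne_zero two_ne_zero this
    field_simp
    ring
  have hP : HasSum h P := by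
    have h1 := (hasSum_nat_add_iff (f := h) 1).1 hstep
    simpa [hh0] using h1
  have hQ : ∑' k, h k = P := hP.tsum_eq
  have hPlt : |P| < 1 := by
    have h1 : |∑' k, h k| ≤ A := by
      rw [hAdef]
      simpa [Real.norm_eq_abs] using norm_tsum_le_tsum_norm
        (by simpa [Real.norm_eq_abs] using habs : Summable fun k => ‖h k‖)
    rw [← hQ]
    exact lt_of_le_of_lt h1 hA1
  -- log series
  have hlog : HasSum (fun l : ℕ => ((-1:ℝ)^(l+1)/l) * P^l) (Real.log (1+P)) := by
    have h1 := Real.hasSum_pow_div_log_of_abs_lt_one (x := -P) (by rwa [abs_neg])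
    have h2 := h1.neg
    have hfe : (fun n : ℕ => -((-P)^(n+1)/((n:ℝ)+1)))
        = fun n : ℕ => ((-1:ℝ)^((n+1)+1)/((n+1:ℕ):ℝ)) * P^(n+1) := by
      funext n
      push_cast
      rw [neg_pow]
      ring
    have hv : -(-Real.log (1 - -P)) = Real.log (1+P) := by
      rw [sub_neg_eq_add, neg_neg]
    rw [hfe, hv] at h2
    have h4 := (hasSum_nat_add_iff (f := fun l : ℕ => ((-1:ℝ)^(l+1)/l) * P^l) 1).1 h2
    simpa using h4
  -- the double series
  set t : ℕ × ℕ → ℝ := fun p => ((-1:ℝ)^(p.1+1)/p.1) *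
    ∑ c ∈ Finset.Nat.antidiagonalTuple p.1 p.2, ∏ i, h (c i) with htdef
  have habs' : Summable (fun k => |(|h k|)|) := by simpa [abs_abs] using habs
  have hq' : ∀ l : ℕ, HasSum (fun m => ∑ c ∈ Finset.Nat.antidiagonalTuple l m,
      ∏ i, |h (c i)|) (A^l) := by
    intro l
    have := aux_key_ad (fun k => |h k|) habs' l
    rwa [← hAdef] at this
  have hrow : ∀ l : ℕ, HasSum (fun m => t (l, m)) (((-1:ℝ)^(l+1)/l) * P^l) := by
    intro l
    have h1 := (aux_key_ad h habs l).mul_left ((-1:ℝ)^(l+1)/l)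
    rwa [hQ] at h1
  have hbound_t : ∀ p : ℕ × ℕ, |t p| ≤ ∑ c ∈ Finset.Nat.antidiagonalTuple p.1 p.2,
      ∏ i, |h (c i)| := by
    rintro ⟨l, m⟩
    have h1 : |((-1:ℝ)^(l+1)/(l:ℝ))| ≤ 1 := by
      match l with
      | 0 => norm_num
      | (n+1) =>
          rw [abs_div, abs_pow, abs_neg, abs_one, one_pow]
          rw [div_le_one (by positivity)]
          rw [abs_of_nonneg (by positivity)]
          exact_mod_cast Nat.one_le_iff_ne_zero.2 (Nat.succ_ne_zero n)
    have h2 : |∑ c ∈ Finset.Nat.antidiagonalTuple l m, ∏ i, h (c i)|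
        ≤ ∑ c ∈ Finset.Nat.antidiagonalTuple l m, ∏ i, |h (c i)| := by
      refine (Finset.abs_sum_le_sum_abs _ _).trans (le_of_eq ?_)
      exact Finset.sum_congr rfl fun c _ => Finset.abs_prod _ _
    calc |t (l,m)| = |((-1:ℝ)^(l+1)/(l:ℝ))| *
        |∑ c ∈ Finset.Nat.antidiagonalTuple l m, ∏ i, h (c i)| := abs_mul _ _
      _ ≤ 1 * (∑ c ∈ Finset.Nat.antidiagonalTuple l m, ∏ i, |h (c i)|) :=
          mul_le_mul h1 h2 (abs_nonneg _) zero_le_one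
      _ = _ := one_mul _
  have hsum_abs_t : Summable (fun p : ℕ × ℕ => |t p|) := by
    rw [summable_prod_of_nonneg (fun p => abs_nonneg _)]
    constructor
    · intro l
      exact Summable.of_nonneg_of_le (fun _ => abs_nonneg _)
        (fun m => hbound_t (l, m)) (hq' l).summable
    · apply Summable.of_nonneg_of_le
        (fun l => tsum_nonneg fun m => abs_nonneg _) (fun l => ?_)
        (summable_geometric_of_lt_one hA0 hA1)
      calc (∑' m, |t (l,m)|)
          ≤ ∑' m, (∑ c ∈ Finset.Nat.antidiagonalTuple l m, ∏ i, |h (c i)|) :=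
            Summable.tsum_le_tsum (fun m => hbound_t (l,m))
              (Summable.of_nonneg_of_le (fun _ => abs_nonneg _)
                (fun m => hbound_t (l, m)) (hq' l).summable)
              (hq' l).summable
        _ = A^l := (hq' l).tsum_eq
  have ht : Summable t := summable_abs_iff.1 hsum_abs_t
  have hT : HasSum t (∑' p, t p) := ht.hasSum
  have hfib1 : HasSum (fun l : ℕ => ((-1:ℝ)^(l+1)/(l:ℝ)) * P^l) (∑' p, t p) :=
    hT.prod_fiberwise hrow
  have hSlog : (∑' p, t p) = Real.log (1+P) := hfib1.unique hlog
  -- columns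
  have hcol : ∀ m : ℕ, HasSum (fun l => t (l, m)) (∑ l ∈ Finset.Icc 1 m, t (l, m)) := by
    intro m
    apply hasSum_sum_of_ne_finset_zero
    intro l hl
    match l, hl with
    | 0, _ => simp [htdef]
    | (n+1), hl =>
        have hml : m < n+1 := by
          by_contra hc
          exact hl (Finset.mem_Icc.2 ⟨Nat.succ_le_succ (Nat.zero_le n), not_lt.1 hc⟩)
        have hzero : ∀ c ∈ Finset.Nat.antidiagonalTuple (n+1) m, (∏ i, h (c i)) = 0 := by
          intro c hc
          have hsum := Finset.Nat.mem_antidiagonalTuple.1 hc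
          by_cases hex : ∃ i, c i = 0
          · obtain ⟨i, hi⟩ := hex
            refine Finset.prod_eq_zero (Finset.mem_univ i) ?_
            rw [hi, hh0]
          · push_neg at hex
            exfalso
            have hle : (n+1 : ℕ) ≤ m := by
              calc (n+1 : ℕ) = ∑ _i : Fin (n+1), 1 := by simp
                _ ≤ ∑ i, c i := Finset.sum_le_sum fun i _ =>
                    Nat.one_le_iff_ne_zero.2 (hex i)
                _ = m := hsum
            omega
        simp [htdef, Finset.sum_eq_zero hzero]
  have hswap : HasSum (fun p : ℕ × ℕ => t (p.2, p.1)) (∑' p, t p) :=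
    ((Equiv.prodComm ℕ ℕ).hasSum_iff).2 hT
  have hw : HasSum (fun m => ∑ l ∈ Finset.Icc 1 m, t (l, m)) (∑' p, t p) :=
    hswap.prod_fiberwise hcol
  have hshift : HasSum (fun k => ∑ l ∈ Finset.Icc 1 (k+1), t (l, k+1)) (∑' p, t p) := by
    refine (hasSum_nat_add_iff
      (f := fun m => ∑ l ∈ Finset.Icc 1 m, t (l, m)) 1).2 ?_
    simpa using hw
  have hdiv := hshift.div_const x
  -- final conversions
  have hterm : ∀ k : ℕ, (∑ l ∈ Finset.Icc 1 (k+1), t (l, k+1)) / x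
      = (∑ l ∈ Finset.Icc 1 (k + 1), ((-1 : ℝ) ^ (l + 1) / l) *
          ∑ c ∈ (Finset.Nat.antidiagonalTuple l (k + 1)).filter (fun c => ∀ i, 0 < c i),
            ∏ i, (if c i = 1 then -1 / (1 - β) else -β * V (c i))) * x ^ k := by
    intro k
    have h1 : ∀ l : ℕ, (∑ c ∈ Finset.Nat.antidiagonalTuple l (k+1), ∏ i, h (c i))
        = (∑ c ∈ (Finset.Nat.antidiagonalTuple l (k + 1)).filter (fun c => ∀ i, 0 < c i),
            ∏ i, (if c i = 1 then -1 / (1 - β) else -β * V (c i))) * x^(k+1) := by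
      intro l
      rw [Finset.sum_mul]
      rw [← Finset.sum_subset (Finset.filter_subset (fun c => ∀ i, 0 < c i)
        (Finset.Nat.antidiagonalTuple l (k+1))) ?_]
      · apply Finset.sum_congr rfl
        intro c hc
        rw [Finset.mem_filter] at hc
        obtain ⟨hc1, hc2⟩ := hc
        have hsum := Finset.Nat.mem_antidiagonalTuple.1 hc1
        calc (∏ i, h (c i)) = ∏ i, (a (c i) * x^(c i)) := rfl
          _ = (∏ i, a (c i)) * ∏ i, x^(c i) := Finset.prod_mul_distrib
          _ = (∏ i, a (c i)) * x^(∑ i, c i) := by rw [Finset.prod_pow_eq_pow_sum]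
          _ = (∏ i, (if c i = 1 then -1 / (1 - β) else -β * V (c i))) * x^(k+1) := by
              rw [hsum]
              congr 1
              apply Finset.prod_congr rfl
              intro i _
              have : c i ≠ 0 := Nat.pos_iff_ne_zero.1 (hc2 i)
              simp only [hadef]
              rw [if_neg this]
      · intro c hc hcn
        rw [Finset.mem_filter] at hcn
        push_neg at hcn
        obtain ⟨i, hi⟩ := hcn hc
        have : c i = 0 := by omega
        refine Finset.prod_eq_zero (Finset.mem_univ i) ?_
        rw [this, hh0]
    rw [show (∑ l ∈ Finset.Icc 1 (k+1), t (l, k+1))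
        = (∑ l ∈ Finset.Icc 1 (k + 1), ((-1 : ℝ) ^ (l + 1) / l) *
          ∑ c ∈ (Finset.Nat.antidiagonalTuple l (k + 1)).filter (fun c => ∀ i, 0 < c i),
            ∏ i, (if c i = 1 then -1 / (1 - β) else -β * V (c i))) * x^(k+1) from ?_]
    · rw [pow_succ, ← mul_assoc, mul_div_assoc, div_self hx, mul_one]
    · rw [Finset.sum_mul]
      apply Finset.sum_congr rfl
      intro l _
      rw [htdef]
      simp only
      rw [h1 l]
      ring
  have h1P : 1 + P = (1 + β - x + Real.sqrt ((1 - β - x) ^ 2 - 4 * β * x)) / 2 := by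
    rw [hPdef]; ring
  have hval : (∑' p, t p) / x
      = (1 / x) * Real.log ((1 + β - x + Real.sqrt ((1 - β - x) ^ 2 - 4 * β * x)) / 2) := by
    rw [hSlog, h1P, one_div_mul_eq_div]
  rw [hval] at hdiv
  simp only [hterm] at hdiv
  exact hdiv
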